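/- Let A ⊆ ℕ be a set of positive integers such that the series ∑_{a∈A} 1/a diverges. Then for every ε > 0 and every integer k ≥ 1, there exists an arithmetic progression P = {a, a+Δ, ..., a+(k-1)Δ} of length k with gap length Δ ≥ 1 such that sup_{p∈P} inf_{a∈A} |p − a| ≤ εΔ. -/

import Mathlib

open Classical in
/-- Number of elements of `A` in `[b, b+L)`. -/
noncomputable def apCnt (A : Set ℕ) (b L : ℕ) : ℕ :=
  ((Finset.Ico b (b + L)).filter (fun n => n ∈ A)).card

lemma apCnt_le_len (A : Set ℕ) (b L : ℕ) : apCnt A b L ≤ L := by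
  classical
  calc apCnt A b L ≤ (Finset.Ico b (b + L)).card := Finset.card_filter_le _ _
  _ = L := by rw [Nat.card_Ico]; omega

lemma apCnt_split (A : Set ℕ) {b L c g : ℕ} (hbc : b ≤ c) (hcg : c + g ≤ b + L)
    (hgap : ∀ x ∈ A, ¬(c ≤ x ∧ x < c + g)) :
    apCnt A b L ≤ apCnt A b (c - b) + apCnt A (c + g) (b + L - (c + g)) := by
  classical
  unfold apCnt
  rw [Nat.add_sub_cancel' hbc, Nat.add_sub_cancel' hcg]
  refine le_trans (Finset.card_le_card ?_) (Finset.card_union_le _ _)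
  intro n hn
  simp only [Finset.mem_filter, Finset.mem_Ico, Finset.mem_union] at hn ⊢
  obtain ⟨⟨h1, h2⟩, hnA⟩ := hn
  by_cases hc : n < c
  · exact Or.inl ⟨⟨h1, hc⟩, hnA⟩
  · push_neg at hc
    have := hgap n hnA
    have : c + g ≤ n := by omega
    exact Or.inr ⟨⟨this, h2⟩, hnA⟩

lemma card_le_apCnt (A : Set ℕ) (v : Finset ℕ) (b L : ℕ) (hv : ∀ n ∈ v, n ∈ A)
    (hsub : ∀ n ∈ v, b ≤ n ∧ n < b + L) : v.card ≤ apCnt A b L := by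
  classical
  unfold apCnt
  apply Finset.card_le_card
  intro n hn
  simp only [Finset.mem_filter, Finset.mem_Ico]
  exact ⟨hsub n hn, hv n hn⟩

lemma rpow_concave_two {x y α : ℝ} (hx : 0 ≤ x) (hy : 0 ≤ y) (h0 : 0 ≤ α) (h1 : α ≤ 1) :
    x ^ α + y ^ α ≤ 2 ^ (1 - α) * (x + y) ^ α := by
  have hc := (Real.concaveOn_rpow h0 h1).2 (Set.mem_Ici.2 hx) (Set.mem_Ici.2 hy)
    (by norm_num : (0:ℝ) ≤ 1/2) (by norm_num : (0:ℝ) ≤ 1/2) (by norm_num)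
  simp only [smul_eq_mul] at hc
  have heq : (1/2:ℝ) * x + (1/2) * y = (x+y)/2 := by ring
  rw [heq] at hc
  have h2 : (2:ℝ) ^ (1 - α) * (x+y) ^ α = 2 * ((x+y)/2) ^ α := by
    rw [Real.div_rpow (by linarith) (by norm_num : (0:ℝ) ≤ 2),
      Real.rpow_sub (by norm_num : (0:ℝ) < 2), Real.rpow_one]
    field_simp
  rw [h2]
  linarith

lemma apCnt_bound (A : Set ℕ) (ρ α : ℝ) (L₁ : ℕ) (hL₁ : 1 ≤ L₁)
    (hρ0 : 0 < ρ) (hρ1 : ρ < 1) (hα0 : 0 < α) (hα1 : α ≤ 1)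
    (hmul : (2:ℝ) ^ (1 - α) * (1 - ρ) ^ α ≤ 1)
    (hgap : ∀ b L : ℕ, L₁ ≤ L → ∃ c g : ℕ, b ≤ c ∧ c + g ≤ b + L ∧ ρ * L ≤ (g:ℝ) ∧
      ∀ x ∈ A, ¬(c ≤ x ∧ x < c + g)) :
    ∀ L b : ℕ, (apCnt A b L : ℝ) ≤ (L₁:ℝ) ^ (1 - α) * (L:ℝ) ^ α := by
  set C : ℝ := (L₁:ℝ) ^ (1 - α) with hC
  have hCpos : 0 < C := Real.rpow_pos_of_pos (by exact_mod_cast hL₁) _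
  intro L
  induction L using Nat.strong_induction_on with
  | _ L IH =>
    intro b
    rcases le_or_gt L L₁ with hL | hL
    · -- base case
      rcases Nat.eq_zero_or_pos L with rfl | hLpos
      · simp [apCnt, Real.zero_rpow hα0.ne']
      · have h1 : (apCnt A b L : ℝ) ≤ (L : ℝ) := by exact_mod_cast apCnt_le_len A b L
        have h2 : (L:ℝ) = (L:ℝ) ^ (1 - α) * (L:ℝ) ^ α := by
          rw [← Real.rpow_add (by exact_mod_cast hLpos)]
          norm_num
        have h3 : (L:ℝ) ^ (1 - α) ≤ C := by
          apply Real.rpow_le_rpow (by positivity) (by exact_mod_cast hL) (by linarith)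
        calc (apCnt A b L : ℝ) ≤ (L:ℝ) := h1
          _ = (L:ℝ) ^ (1 - α) * (L:ℝ) ^ α := h2
          _ ≤ C * (L:ℝ) ^ α := by
              apply mul_le_mul_of_nonneg_right h3 (Real.rpow_nonneg (by positivity) _)
    · obtain ⟨c, g, hbc, hcg, hg, hAgap⟩ := hgap b L hL.le
      have hg1 : 1 ≤ g := by
        by_contra h
        push_neg at h
        interval_cases g
        simp only [Nat.cast_zero] at hg
        nlinarith [hρ0, (by exact_mod_cast hL₁.trans hL.le : (1:ℝ) ≤ (L:ℝ))]
      set L1 : ℕ := c - b with hL1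
      set L2 : ℕ := b + L - (c + g) with hL2
      have hlt1 : L1 < L := by omega
      have hlt2 : L2 < L := by omega
      have hsum : (L1:ℝ) + (L2:ℝ) ≤ (1 - ρ) * L := by
        have : (L1:ℝ) + (L2:ℝ) = (L:ℝ) - g := by
          have : L1 + L2 + g = L := by omega
          push_cast [← this]
          ring
        rw [this]
        nlinarith [hg]
      have step : (apCnt A b L : ℝ) ≤ (apCnt A b L1 : ℝ) + (apCnt A (c+g) L2 : ℝ) := by
        exact_mod_cast apCnt_split A hbc hcg hAgap
      have hconc : (L1:ℝ) ^ α + (L2:ℝ) ^ α ≤ 2 ^ (1-α) * ((L1:ℝ) + L2) ^ α :=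
        rpow_concave_two (by positivity) (by positivity) hα0.le hα1
      have hmono : ((L1:ℝ) + L2) ^ α ≤ ((1 - ρ) * L) ^ α :=
        Real.rpow_le_rpow (by positivity) hsum hα0.le
      have hsplit : ((1 - ρ) * (L:ℝ)) ^ α = (1 - ρ) ^ α * (L:ℝ) ^ α :=
        Real.mul_rpow (by linarith) (by positivity)
      calc (apCnt A b L : ℝ)
          ≤ (apCnt A b L1 : ℝ) + (apCnt A (c+g) L2 : ℝ) := step
        _ ≤ C * (L1:ℝ) ^ α + C * (L2:ℝ) ^ α := add_le_add (IH L1 hlt1 b) (IH L2 hlt2 (c+g))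
        _ = C * ((L1:ℝ) ^ α + (L2:ℝ) ^ α) := by ring
        _ ≤ C * (2 ^ (1-α) * ((L1:ℝ) + L2) ^ α) := by
            apply mul_le_mul_of_nonneg_left hconc hCpos.le
        _ ≤ C * (2 ^ (1-α) * ((1 - ρ) * (L:ℝ)) ^ α) := by
            apply mul_le_mul_of_nonneg_left _ hCpos.le
            apply mul_le_mul_of_nonneg_left hmono (Real.rpow_nonneg (by norm_num) _)
        _ = (C * (L:ℝ) ^ α) * (2 ^ (1-α) * (1 - ρ) ^ α) := by rw [hsplit]; ring
        _ ≤ (C * (L:ℝ) ^ α) * 1 := by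
            apply mul_le_mul_of_nonneg_left hmul (by positivity)
        _ = C * (L:ℝ) ^ α := by ring

lemma summable_of_apCnt (A : Set ℕ) (hA : ∀ a ∈ A, 0 < a) (C α : ℝ) (hC : 0 ≤ C)
    (hα1 : α < 1)
    (hcnt : ∀ b L : ℕ, (apCnt A b L : ℝ) ≤ C * (L:ℝ) ^ α) :
    Summable (fun a : A => (1:ℝ)/a) := by
  classical
  set r : ℝ := (2:ℝ) ^ (α - 1) with hrdef
  have hr0 : 0 ≤ r := Real.rpow_nonneg (by norm_num) _
  have hr1 : r < 1 := Real.rpow_lt_one_of_one_lt_of_neg (by norm_num) (by linarith)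
  have hne : r ≠ 1 := ne_of_lt hr1
  apply summable_of_sum_le (c := C * (1 - r)⁻¹)
  · intro a
    positivity
  · intro u
    set v : Finset ℕ := u.image Subtype.val with hvdef
    have hsum_eq : ∑ n ∈ v, (1:ℝ)/n = ∑ x ∈ u, (1:ℝ)/(x : ℕ) := by
      apply Finset.sum_image
      intro x _ y _ h
      exact Subtype.ext h
    have hv : ∀ n ∈ v, n ∈ A := by
      intro n hn
      rw [hvdef, Finset.mem_image] at hn
      obtain ⟨a, _, rfl⟩ := hn
      exact a.2
    have hvpos : ∀ n ∈ v, 1 ≤ n := fun n hn => hA n (hv n hn)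
    -- key dyadic induction
    have key : ∀ J : ℕ, ∑ n ∈ v.filter (· < 2^J), (1:ℝ)/n ≤ C * ∑ j ∈ Finset.range J, r^j := by
      intro J
      induction J with
      | zero =>
        have : v.filter (· < 2^0) = ∅ := by
          apply Finset.filter_false_of_mem
          intro n hn
          have := hvpos n hn
          omega
        rw [this]
        simp
      | succ J IH =>
        have hsplit : v.filter (· < 2^(J+1)) =
            v.filter (· < 2^J) ∪ v.filter (fun n => 2^J ≤ n ∧ n < 2^(J+1)) := by
          ext n
          simp only [Finset.mem_filter, Finset.mem_union]
          have h2 : (2:ℕ)^J ≤ 2^(J+1) := Nat.pow_le_pow_right (by norm_num) (by omega)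
          constructor
          · rintro ⟨hn, hlt⟩
            by_cases h : n < 2^J
            · exact Or.inl ⟨hn, h⟩
            · exact Or.inr ⟨hn, by omega, hlt⟩
          · rintro (⟨hn, h⟩ | ⟨hn, h1, h2'⟩)
            · exact ⟨hn, by omega⟩
            · exact ⟨hn, h2'⟩
        have hdisj : Disjoint (v.filter (· < 2^J)) (v.filter (fun n => 2^J ≤ n ∧ n < 2^(J+1))) := by
          rw [Finset.disjoint_left]
          intro n h1 h2
          rw [Finset.mem_filter] at h1 h2
          omega
        rw [hsplit, Finset.sum_union hdisj]
        set F := v.filter (fun n => 2^J ≤ n ∧ n < 2^(J+1)) with hF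
        have hcard : F.card ≤ apCnt A (2^J) (2^J) := by
          apply card_le_apCnt A F (2^J) (2^J)
          · intro n hn
            exact hv n (Finset.mem_of_mem_filter n hn)
          · intro n hn
            simp only [hF, Finset.mem_filter] at hn
            constructor
            · exact hn.2.1
            · have : 2^J + 2^J = 2^(J+1) := by ring
              omega
        have hterm : ∀ n ∈ F, (1:ℝ)/n ≤ ((2:ℝ)^J)⁻¹ := by
          intro n hn
          simp only [hF, Finset.mem_filter] at hn
          rw [one_div]
          apply inv_anti₀ (by positivity)
          exact_mod_cast hn.2.1
        have hFsum : ∑ n ∈ F, (1:ℝ)/n ≤ (F.card : ℝ) * ((2:ℝ)^J)⁻¹ := by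
          calc ∑ n ∈ F, (1:ℝ)/n ≤ F.card • ((2:ℝ)^J)⁻¹ := Finset.sum_le_card_nsmul F _ _ hterm
            _ = (F.card : ℝ) * ((2:ℝ)^J)⁻¹ := by rw [nsmul_eq_mul]
        have hF2 : (F.card : ℝ) * ((2:ℝ)^J)⁻¹ ≤ C * r^J := by
          have h1 : (F.card : ℝ) ≤ C * ((2^J : ℕ):ℝ)^α := by
            calc (F.card : ℝ) ≤ (apCnt A (2^J) (2^J) : ℝ) := by exact_mod_cast hcard
              _ ≤ C * ((2^J : ℕ):ℝ)^α := hcnt _ _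
          have hkey : ((2^J : ℕ):ℝ)^α * ((2:ℝ)^J)⁻¹ = r^J := by
            have h2 : ((2^J : ℕ):ℝ) = (2:ℝ)^((J:ℕ):ℝ) := by
              push_cast
              rw [Real.rpow_natCast]
            have h3 : ((2:ℝ)^J)⁻¹ = (2:ℝ)^(-(J:ℝ)) := by
              rw [Real.rpow_neg (by norm_num), Real.rpow_natCast]
            rw [h2, h3, ← Real.rpow_mul (by norm_num), ← Real.rpow_add (by norm_num)]
            rw [hrdef, ← Real.rpow_natCast ((2:ℝ)^(α-1)) J, ← Real.rpow_mul (by norm_num)]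
            congr 1
            ring
          calc (F.card : ℝ) * ((2:ℝ)^J)⁻¹ ≤ (C * ((2^J : ℕ):ℝ)^α) * ((2:ℝ)^J)⁻¹ := by
                apply mul_le_mul_of_nonneg_right h1 (by positivity)
            _ = C * (((2^J : ℕ):ℝ)^α * ((2:ℝ)^J)⁻¹) := by ring
            _ = C * r^J := by rw [hkey]
        rw [Finset.sum_range_succ, mul_add]
        exact add_le_add IH (hFsum.trans hF2)
    -- choose J large enough
    set J := (v.sup id) + 1 with hJ
    have hall : v.filter (· < 2^J) = v := by
      apply Finset.filter_true_of_mem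
      intro n hn
      have h1 : n ≤ v.sup id := Finset.le_sup (f := id) hn
      have h2 : v.sup id < 2^(v.sup id) := Nat.lt_two_pow_self
      have h3 : (2:ℕ)^(v.sup id) ≤ 2^J := Nat.pow_le_pow_right (by norm_num) (by omega)
      omega
    have hgeo : ∑ j ∈ Finset.range J, r^j ≤ (1 - r)⁻¹ := by
      rw [geom_sum_eq hne J, div_le_iff_of_neg (by linarith : r - 1 < 0)]
      have : (1-r)⁻¹ * (r-1) = -1 := by
        rw [inv_mul_eq_div, div_eq_iff (by linarith : (1:ℝ)-r ≠ 0)]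
        ring
      rw [this]
      nlinarith [pow_nonneg hr0 J]
    calc ∑ x ∈ u, (1:ℝ)/x = ∑ n ∈ v, (1:ℝ)/n := hsum_eq.symm
      _ = ∑ n ∈ v.filter (· < 2^J), (1:ℝ)/n := by rw [hall]
      _ ≤ C * ∑ j ∈ Finset.range J, r^j := key J
      _ ≤ C * (1 - r)⁻¹ := mul_le_mul_of_nonneg_left hgeo hC


/-- Theorem 2.1 of Fraser–Yu: if the reciprocals of `A` form a divergent series, then for
every `ε > 0` and `k ≥ 1` there is an arithmetic progression of length `k` and gap length
`Δ ≥ 1` which is approximated by `A` to within `ε * Δ`. -/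
theorem erdos_weak_approx (A : Set ℕ) (hA : ∀ a ∈ A, 0 < a)
    (hdiv : ¬ Summable (fun a : A => (1 : ℝ) / a)) :
    ∀ ε : ℝ, 0 < ε → ∀ k : ℕ, 1 ≤ k →
      ∃ a Δ : ℝ, 1 ≤ Δ ∧
        ∀ i : ℕ, i < k → ∃ x ∈ A, |a + i * Δ - (x : ℝ)| ≤ ε * Δ := by
  intro ε hε k hk
  by_contra hcon
  push_neg at hcon
  -- hcon : ∀ a Δ, 1 ≤ Δ → ∃ i, i < k ∧ ∀ x ∈ A, ε * Δ < |a + i * Δ - x|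
  apply hdiv
  set ε₀ : ℝ := min ε (1/2) with hε₀def
  have hε₀ : 0 < ε₀ := lt_min hε (by norm_num)
  have hε₀half : ε₀ ≤ 1/2 := min_le_right _ _
  have hε₀ε : ε₀ ≤ ε := min_le_left _ _
  set m₀ : ℕ := max 2 ⌈1/ε₀⌉₊ with hm₀def
  have hm₀2 : 2 ≤ m₀ := le_max_left _ _
  have hm₀c : ⌈1/ε₀⌉₊ ≤ m₀ := le_max_right _ _
  have hk0 : 0 < k := hk
  -- window claim
  have window : ∀ m : ℕ, m₀ ≤ m → ∀ b : ℕ,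
      ∃ c : ℕ, b ≤ c ∧ c + ⌈ε₀ * (m:ℝ)⌉₊ ≤ b + k * m ∧
        ∀ x ∈ A, ¬(c ≤ x ∧ x < c + ⌈ε₀ * (m:ℝ)⌉₊) := by
    intro m hm b
    set w : ℕ := ⌈ε₀ * (m:ℝ)⌉₊ with hwdef
    have hm2 : 2 ≤ m := le_trans hm₀2 hm
    have hmR : (2:ℝ) ≤ (m:ℝ) := by exact_mod_cast hm2
    have hεm : 1 ≤ ε₀ * (m:ℝ) := by
      have h1 : (1/ε₀ : ℝ) ≤ (⌈1/ε₀⌉₊ : ℝ) := Nat.le_ceil _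
      have h2 : ((⌈1/ε₀⌉₊ : ℕ) : ℝ) ≤ (m : ℝ) := by exact_mod_cast le_trans hm₀c hm
      have h3 : (1/ε₀ : ℝ) ≤ (m:ℝ) := le_trans h1 h2
      calc (1:ℝ) = ε₀ * (1/ε₀) := by field_simp
        _ ≤ ε₀ * (m:ℝ) := by apply mul_le_mul_of_nonneg_left h3 hε₀.le
    have hwle : (w:ℝ) ≤ 2 * (ε₀ * (m:ℝ)) := by
      have := Nat.ceil_lt_add_one (by positivity : (0:ℝ) ≤ ε₀ * (m:ℝ))
      rw [hwdef]
      push_cast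
      linarith
    have hwm : w ≤ m := by
      have : (w:ℝ) ≤ (m:ℝ) := by
        calc (w:ℝ) ≤ 2 * (ε₀ * (m:ℝ)) := hwle
          _ ≤ 2 * ((1/2) * (m:ℝ)) := by
              apply mul_le_mul_of_nonneg_left _ (by norm_num)
              apply mul_le_mul_of_nonneg_right hε₀half (by positivity)
          _ = (m:ℝ) := by ring
      exact_mod_cast this
    by_contra hno
    push_neg at hno
    -- hno : ∀ c, b ≤ c → c + w ≤ b + k * m → ∃ x ∈ A, c ≤ x ∧ x < c + w
    obtain ⟨i, hik, hi⟩ := hcon ((b:ℝ) + w/2) (m:ℝ) (by linarith)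
    have hle : b + i * m + w ≤ b + k * m := by
      have h1 : i + 1 ≤ k := hik
      have h2 : (i+1) * m ≤ k * m := Nat.mul_le_mul_right m h1
      calc b + i * m + w ≤ b + i * m + m := by omega
        _ = b + (i+1) * m := by ring
        _ ≤ b + k * m := by omega
    obtain ⟨x, hxA, hx1, hx2⟩ := hno (b + i * m) (Nat.le_add_right _ _) hle
    have hd := hi x hxA
    have hx1R : (b:ℝ) + i * m ≤ (x:ℝ) := by exact_mod_cast hx1
    have hx2R : (x:ℝ) ≤ (b:ℝ) + i * m + w := by
      have : (x:ℝ) < (b:ℝ) + i * m + w := by exact_mod_cast hx2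
      linarith
    have habs : |(b:ℝ) + w/2 + i * m - x| ≤ (w:ℝ)/2 := by
      rw [abs_le]
      constructor <;> [linarith; linarith]
    have : ε * (m:ℝ) < ε * (m:ℝ) := by
      calc ε * (m:ℝ) < |(b:ℝ) + w/2 + i * m - x| := hd
        _ ≤ (w:ℝ)/2 := habs
        _ ≤ ε₀ * (m:ℝ) := by linarith
        _ ≤ ε * (m:ℝ) := by
            apply mul_le_mul_of_nonneg_right hε₀ε (by positivity)
    exact absurd this (lt_irrefl _)
  -- gap property
  set ρ : ℝ := ε₀ / (2 * k) with hρdef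
  have hkR : (0:ℝ) < (k:ℝ) := by exact_mod_cast hk0
  have hρ0 : 0 < ρ := by positivity
  have hρ1 : ρ < 1 := by
    rw [hρdef, div_lt_one (by positivity)]
    have : (1:ℝ) ≤ (k:ℝ) := by exact_mod_cast hk
    linarith
  set L₁ : ℕ := k * (m₀ + 2) with hL₁def
  have hL₁1 : 1 ≤ L₁ := by
    have : 1 * 1 ≤ k * (m₀ + 2) := Nat.mul_le_mul hk (by omega)
    omega
  have hgap : ∀ b L : ℕ, L₁ ≤ L → ∃ c g : ℕ, b ≤ c ∧ c + g ≤ b + L ∧ ρ * L ≤ (g:ℝ) ∧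
      ∀ x ∈ A, ¬(c ≤ x ∧ x < c + g) := by
    intro b L hL
    set m : ℕ := L / k with hmdef
    clear_value m
    have hkm : k * m ≤ L := by
      rw [hmdef, Nat.mul_comm]
      exact Nat.div_mul_le_self L k
    have hm : m₀ ≤ m := by
      rw [hmdef, Nat.le_div_iff_mul_le hk0]
      calc m₀ * k ≤ (m₀ + 2) * k := Nat.mul_le_mul_right k (by omega)
        _ = k * (m₀ + 2) := Nat.mul_comm _ _
        _ ≤ L := hL
    have hm1 : 1 ≤ m := le_trans (by omega : 1 ≤ m₀) hm
    have hLlt : L < k * m + k := by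
      have h1 : k * (L / k) + L % k = L := Nat.div_add_mod L k
      have h2 : L % k < k := Nat.mod_lt L hk0
      rw [← hmdef] at h1
      omega
    have hL2km : (L:ℝ) ≤ 2 * (k:ℝ) * (m:ℝ) := by
      have h3 : k ≤ k * m := Nat.le_mul_of_pos_right k hm1
      have h4 : L ≤ 2 * (k * m) := by omega
      calc (L:ℝ) ≤ 2 * ((k * m : ℕ):ℝ) := by exact_mod_cast h4
        _ = 2 * (k:ℝ) * (m:ℝ) := by push_cast; ring
    obtain ⟨c, hbc, hcw, hcgap⟩ := window m hm b
    refine ⟨c, ⌈ε₀ * (m:ℝ)⌉₊, hbc, le_trans hcw (Nat.add_le_add_left hkm b), ?_, hcgap⟩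
    have h5 : ρ * (L:ℝ) ≤ ρ * (2 * (k:ℝ) * (m:ℝ)) := mul_le_mul_of_nonneg_left hL2km hρ0.le
    have h6 : ρ * (2 * (k:ℝ) * (m:ℝ)) = ε₀ * (m:ℝ) := by
      rw [hρdef]
      field_simp
    have h7 : ε₀ * (m:ℝ) ≤ (⌈ε₀ * (m:ℝ)⌉₊ : ℝ) := Nat.le_ceil _
    linarith
  -- choose α
  set t : ℝ := 1 - ρ with htdef
  have ht0 : 0 < t := by rw [htdef]; linarith
  have ht1 : t < 1 := by rw [htdef]; linarith
  have hlogt : Real.log t < 0 := Real.log_neg ht0 ht1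
  have hlog2 : 0 < Real.log 2 := Real.log_pos (by norm_num)
  have hden : 0 < Real.log 2 - Real.log t := by linarith
  set α : ℝ := Real.log 2 / (Real.log 2 - Real.log t) with hαdef
  have hα0 : 0 < α := div_pos hlog2 hden
  have hα1 : α < 1 := by
    rw [hαdef, div_lt_one hden]
    linarith
  have hmul : (2:ℝ) ^ (1 - α) * (1 - ρ) ^ α ≤ 1 := by
    have e1 : (2:ℝ) ^ (1 - α) = Real.exp (Real.log 2 * (1 - α)) := by
      rw [Real.rpow_def_of_pos (by norm_num)]
    have e2 : t ^ α = Real.exp (Real.log t * α) := by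
      rw [Real.rpow_def_of_pos ht0]
    have e3 : α * (Real.log 2 - Real.log t) = Real.log 2 := by
      rw [hαdef]
      field_simp
    calc (2:ℝ) ^ (1 - α) * (1 - ρ) ^ α = Real.exp (Real.log 2 * (1 - α) + Real.log t * α) := by
          rw [← htdef, e1, e2, Real.exp_add]
      _ = Real.exp 0 := by
          congr 1
          nlinarith [e3]
      _ ≤ 1 := le_of_eq Real.exp_zero
  have hcnt := apCnt_bound A ρ α L₁ hL₁1 hρ0 hρ1 hα0 hα1.le hmul hgap
  exact summable_of_apCnt A hA ((L₁:ℝ) ^ (1 - α)) α (Real.rpow_nonneg (by positivity) _) hα1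
    (fun b L => hcnt L b)
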